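/- arXiv:math/0201004 — 2 statements merged into one kernel-verified Lean document; each statement's English description precedes it below -/
import Mathlib

section
/- For the classical SU(2) coefficients a_±, b_± (q = 1 case), the condition that the commutators [D,α] and [D,β] are bounded for a diagonal operator D e^{(n)}_{ij} = d(n,i) e^{(n)}_{ij} implies: there exists C such that for all (n,i) with i ≥ 0, |d(n+1/2, i+1/2) - d(n,i)| ≤ C, and for all (n,i) with i ≤ 0, |d(n+1/2, i-1/2) - d(n,i)| ≤ C. More precisely, prove the coefficient estimates: max_j |b_+(n,i,j)| = ((n+i+1)/(2n+2))^{1/2} ≥ 1/√2 for i ≥ 0, and max_j a_+(n,i,j) = ((n-i+1)/(2n+2))^{1/2} ≥ 1/√2 for i ≤ 0. -/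
/- Classical (`q = 1`) coefficients, coordinates `N = 2n`, `I = n+i`, `J = n+j`:
`n-j+1 = N-J+1`, `n-i+1 = N-I+1`, `n+i+1 = I+1`, `2n+1 = N+1`, `2n+2 = N+2`;
`i ≥ 0 ↔ N ≤ 2I`, `i ≤ 0 ↔ 2I ≤ N`. -/
noncomputable def caPlus (N I J : ℕ) : ℝ :=
  Real.sqrt (((N : ℝ) - J + 1) * ((N : ℝ) - I + 1) / (((N : ℝ) + 1) * ((N : ℝ) + 2)))

noncomputable def cbPlus (N I J : ℕ) : ℝ :=
  -Real.sqrt (((N : ℝ) - J + 1) * ((I : ℝ) + 1) / (((N : ℝ) + 1) * ((N : ℝ) + 2)))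

theorem stmt15 (N I : ℕ) (hI : I ≤ N) :
    ((Finset.range (N+1)).sup' ⟨0, Finset.mem_range.2 (Nat.succ_pos N)⟩
        (fun J => |cbPlus N I J|) = Real.sqrt (((I : ℝ) + 1) / ((N : ℝ) + 2))) ∧
    (N ≤ 2*I →
      1 / Real.sqrt 2 ≤ (Finset.range (N+1)).sup' ⟨0, Finset.mem_range.2 (Nat.succ_pos N)⟩
        (fun J => |cbPlus N I J|)) ∧
    ((Finset.range (N+1)).sup' ⟨0, Finset.mem_range.2 (Nat.succ_pos N)⟩
        (fun J => caPlus N I J) = Real.sqrt (((N : ℝ) - I + 1) / ((N : ℝ) + 2))) ∧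
    (2*I ≤ N →
      1 / Real.sqrt 2 ≤ (Finset.range (N+1)).sup' ⟨0, Finset.mem_range.2 (Nat.succ_pos N)⟩
        (fun J => caPlus N I J)) := by
  have hN1 : (0:ℝ) < (N:ℝ) + 1 := by positivity
  have hN2 : (0:ℝ) < (N:ℝ) + 2 := by positivity
  have hIN : (I:ℝ) ≤ (N:ℝ) := by exact_mod_cast hI
  have key : ∀ (c : ℝ), 0 ≤ c →
      (Finset.range (N+1)).sup' ⟨0, Finset.mem_range.2 (Nat.succ_pos N)⟩
        (fun J => Real.sqrt (((N : ℝ) - J + 1) * c / (((N : ℝ) + 1) * ((N : ℝ) + 2))))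
      = Real.sqrt (c / ((N : ℝ) + 2)) := by
    intro c hc
    apply le_antisymm
    · apply Finset.sup'_le
      intro J hJ
      apply Real.sqrt_le_sqrt
      have hJN : (J:ℝ) ≤ N := by
        exact_mod_cast Nat.lt_succ_iff.mp (Finset.mem_range.mp hJ)
      rw [div_le_div_iff₀ (by positivity) hN2]
      nlinarith [mul_nonneg (mul_nonneg hc hN2.le) (Nat.cast_nonneg J : (0:ℝ) ≤ J)]
    · have h0 := Finset.le_sup'
        (f := fun J : ℕ => Real.sqrt (((N : ℝ) - J + 1) * c / (((N : ℝ) + 1) * ((N : ℝ) + 2))))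
        (Finset.mem_range.2 (Nat.succ_pos N))
      refine le_trans (le_of_eq ?_) h0
      congr 1
      push_cast
      field_simp
      ring
  have hb : (fun J : ℕ => |cbPlus N I J|)
      = fun J : ℕ => Real.sqrt (((N : ℝ) - J + 1) * ((I : ℝ) + 1) / (((N : ℝ) + 1) * ((N : ℝ) + 2))) := by
    funext J
    rw [cbPlus, abs_neg, abs_of_nonneg (Real.sqrt_nonneg _)]
  have hbsup : (Finset.range (N+1)).sup' ⟨0, Finset.mem_range.2 (Nat.succ_pos N)⟩
      (fun J => |cbPlus N I J|) = Real.sqrt (((I : ℝ) + 1) / ((N : ℝ) + 2)) := by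
    rw [hb]; exact key _ (by positivity)
  have hasup : (Finset.range (N+1)).sup' ⟨0, Finset.mem_range.2 (Nat.succ_pos N)⟩
      (fun J => caPlus N I J) = Real.sqrt (((N : ℝ) - I + 1) / ((N : ℝ) + 2)) := by
    simp only [caPlus]
    exact key _ (by linarith)
  refine ⟨hbsup, ?_, hasup, ?_⟩
  · intro h
    have h' : (N:ℝ) ≤ 2 * I := by exact_mod_cast h
    rw [hbsup, one_div, ← Real.sqrt_inv]
    apply Real.sqrt_le_sqrt
    rw [le_div_iff₀ hN2]
    linarith
  · intro h
    have h' : 2 * (I:ℝ) ≤ N := by exact_mod_cast h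
    rw [hasup, one_div, ← Real.sqrt_inv]
    apply Real.sqrt_le_sqrt
    rw [le_div_iff₀ hN2]
    linarith
end

section
/- Let d : {(n,i) : n ∈ (1/2)ℕ, i ∈ {-n,...,n}} → ℝ satisfy: (a) there is C with |d(n+1/2, i+1/2) - d(n,i)| ≤ C whenever i ≥ 0; (b) there is C with |d(n+1/2, i-1/2) - d(n,i)| ≤ C whenever i ≤ 0; (c) |d(n+1, 0) - d(n, 0)| ≤ C for all integer n; (d) |d(n,i)| → ∞ in the sense that for all N, {(n,i) : |d(n,i)| ≤ N} is finite. Then there exist m such that all d(n,i) with n ≥ m and |i| ≤ n - m have the same sign. -/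
private lemma samesign17 {C x y : ℝ} (hx : C < |x|) (hy : C < |y|) (h : |y - x| ≤ C) :
    (0 < x ↔ 0 < y) := by
  have hC : 0 ≤ C := (abs_nonneg _).trans h
  rcases abs_cases x with ⟨e1, s1⟩ | ⟨e1, s1⟩ <;>
  rcases abs_cases y with ⟨e2, s2⟩ | ⟨e2, s2⟩ <;>
  rcases abs_le.mp h with ⟨h1, h2⟩ <;>
  rw [e1] at hx <;> rw [e2] at hy <;>
  constructor <;> intro hp <;> linarith

/- Coordinates: `d N I` is `d(n,i)`, `N = 2n`, `I = n+i`; `i ≥ 0 ↔ N ≤ 2I`,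
`i ≤ 0 ↔ 2I ≤ N`; the central column `i = 0` is `d (2m) m` (integer `n = m`);
the region `n ≥ m₀, |i| ≤ n - m₀` is `m₀ ≤ I ∧ I + m₀ ≤ N`. -/
theorem stmt17 (d : ℕ → ℕ → ℝ) (C : ℝ)
    (ha : ∀ N I, I ≤ N → N ≤ 2*I → |d (N+1) (I+1) - d N I| ≤ C)
    (hb : ∀ N I, I ≤ N → 2*I ≤ N → |d (N+1) I - d N I| ≤ C)
    (hc : ∀ m : ℕ, |d (2*m+2) (m+1) - d (2*m) m| ≤ C)
    (hfin : ∀ B : ℝ, {p : ℕ × ℕ | p.2 ≤ p.1 ∧ |d p.1 p.2| ≤ B}.Finite) :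
    ∃ m : ℕ, (∀ N I, m ≤ I → I + m ≤ N → 0 < d N I) ∨
             (∀ N I, m ≤ I → I + m ≤ N → d N I < 0) := by
  have hC0 : 0 ≤ C := (abs_nonneg _).trans (ha 0 0 le_rfl (by norm_num))
  set S := (hfin C).toFinset with hS
  set M := S.sup (fun p : ℕ × ℕ => p.1) + 1 with hMdef
  have hbig : ∀ N I, I ≤ N → M ≤ N → C < |d N I| := by
    intro N I hIN hMN
    by_contra hle
    push_neg at hle
    have hmem : (N, I) ∈ S := (hfin C).mem_toFinset.mpr ⟨hIN, hle⟩
    have hle2 : N ≤ S.sup (fun p : ℕ × ℕ => p.1) :=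
      Finset.le_sup (f := fun p : ℕ × ℕ => p.1) hmem
    omega
  have colA : ∀ I, M ≤ I → ∀ k, (0 < d (2*I) I ↔ 0 < d (2*I + k) I) := by
    intro I hI k
    induction k with
    | zero => exact Iff.rfl
    | succ k ih =>
      rw [ih]
      exact samesign17 (hbig _ _ (by omega) (by omega)) (hbig _ _ (by omega) (by omega))
        (hb (2*I+k) I (by omega) (by omega))
  have rowB : ∀ I0, M ≤ I0 → ∀ k, (0 < d (2*I0) I0 ↔ 0 < d (2*I0 + k) (I0 + k)) := by
    intro I0 h0 k
    induction k with
    | zero => exact Iff.rfl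
    | succ k ih =>
      rw [ih]
      exact samesign17 (hbig _ _ (by omega) (by omega)) (hbig _ _ (by omega) (by omega))
        (ha (2*I0+k) (I0+k) (by omega) (by omega))
  have cenC : ∀ k, (0 < d (2*M) M ↔ 0 < d (2*(M+k)) (M+k)) := by
    intro k
    induction k with
    | zero => exact Iff.rfl
    | succ k ih =>
      rw [ih]
      exact samesign17 (hbig _ _ (by omega) (by omega)) (hbig _ _ (by omega) (by omega))
        (hc (M+k))
  have main : ∀ N I, M ≤ I → I + M ≤ N → (0 < d N I ↔ 0 < d (2*M) M) := by
    intro N I hI hN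
    rcases le_or_gt (2*I) N with h2 | h2
    · have e1 := colA I hI (N - 2*I)
      rw [show 2*I + (N - 2*I) = N by omega] at e1
      have e2 := cenC (I - M)
      rw [show M + (I - M) = I by omega] at e2
      rw [← e1, ← e2]
    · set I0 := N - I with hI0
      have hI0M : M ≤ I0 := by omega
      have e1 := rowB I0 hI0M (I - I0)
      rw [show 2*I0 + (I - I0) = N by omega, show I0 + (I - I0) = I by omega] at e1
      have e2 := cenC (I0 - M)
      rw [show M + (I0 - M) = I0 by omega] at e2
      rw [← e1, ← e2]
  have hcen : C < |d (2*M) M| := hbig (2*M) M (by omega) (by omega)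
  rcases lt_trichotomy (d (2*M) M) 0 with hneg | hzero | hpos
  · refine ⟨M, Or.inr fun N I h1 h2 => ?_⟩
    have hne : C < |d N I| := hbig N I (by omega) (by omega)
    rcases lt_trichotomy (d N I) 0 with h | h | h
    · exact h
    · rw [h, abs_zero] at hne; linarith
    · exact absurd ((main N I h1 h2).mp h) (by simp; linarith)
  · rw [hzero, abs_zero] at hcen; linarith
  · exact ⟨M, Or.inl fun N I h1 h2 => (main N I h1 h2).mpr hpos⟩
end
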